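/- arXiv:math/0505105 — 6 statements merged into one kernel-verified Lean document; each statement's English description precedes it below -/
import Mathlib

section
/- In the abstract ordered measure-space setting, if f : X → [0,∞) is ≤-decreasing (u ≤ x implies f(x) ≤ f(u)) and measurable, then Sf is ≤-decreasing: for all u, x ∈ X with u ≤ x one has Sf(x) ≤ Sf(u). -/
open MeasureTheory Set
open scoped ENNReal NNReal

/-- The abstract Hardy operator `Sf(x) = ∫_{X_x} f dμ_x`, where `X_x = {u | u ≤ x}`. -/
noncomputable def hardyOp {X : Type*} [MeasurableSpace X] [PartialOrder X]
    (μ : X → Measure X) (f : X → ℝ≥0) (x : X) : ℝ≥0∞ :=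
  ∫⁻ u in {u : X | u ≤ x}, (f u : ℝ≥0∞) ∂(μ x)

/-- In the abstract partially ordered measure-space setting, if `f` is a
nonnegative measurable `≤`-decreasing function, then `Sf` is `≤`-decreasing: `u ≤ x` implies
`Sf(x) ≤ Sf(u)`. -/
theorem stmt3 {X : Type*} [MeasurableSpace X] [PartialOrder X]
    (μ : X → Measure X) (hσ : ∀ x : X, SigmaFinite (μ x))
    (hlowmeas : ∀ D : Set X, IsLowerSet D → MeasurableSet D)
    (htot : ∀ x u v : X, u ≤ x → v ≤ x → u ≤ v ∨ v ≤ u)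
    (hone : ∀ x : X, μ x {u : X | u ≤ x} = 1)
    (hcons : ∀ x u : X, u ≤ x → ∀ E : Set X, MeasurableSet E → E ⊆ {y : X | y ≤ u} →
      μ x E = μ x {y : X | y ≤ u} * μ u E)
    (f : X → ℝ≥0) (hf : Measurable f)
    (hdec : ∀ u x : X, u ≤ x → f x ≤ f u)
    (u x : X) (hux : u ≤ x) :
    hardyOp μ f x ≤ hardyOp μ f u := by
  set Xu : Set X := {y : X | y ≤ u} with hXu
  set Xx : Set X := {y : X | y ≤ x} with hXx
  have mXu : MeasurableSet Xu := hlowmeas Xu (fun a b hba ha => le_trans hba ha)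
  have mXx : MeasurableSet Xx := hlowmeas Xx (fun a b hba ha => le_trans hba ha)
  have hsub : Xu ⊆ Xx := fun y hy => le_trans hy hux
  set c : ℝ≥0∞ := μ x Xu with hc
  have hc1 : c ≤ 1 := by
    rw [hc, ← hone x]
    exact measure_mono hsub
  -- restricted measure relation
  have hrestrict : (μ x).restrict Xu = c • ((μ u).restrict Xu) := by
    ext E hE
    rw [Measure.restrict_apply hE, Measure.smul_apply, smul_eq_mul,
      Measure.restrict_apply hE]
    exact hcons x u hux (E ∩ Xu) (hE.inter mXu) inter_subset_right
  have hint1 : ∫⁻ y in Xu, (f y : ℝ≥0∞) ∂(μ x) = c * ∫⁻ y in Xu, (f y : ℝ≥0∞) ∂(μ u) := by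
    rw [hrestrict, lintegral_smul_measure, smul_eq_mul]
  -- splitting
  have hsplit : hardyOp μ f x
      = ∫⁻ y in Xu, (f y : ℝ≥0∞) ∂(μ x) + ∫⁻ y in Xx \ Xu, (f y : ℝ≥0∞) ∂(μ x) := by
    rw [hardyOp, ← lintegral_union (mXx.diff mXu) disjoint_sdiff_right,
      union_diff_cancel hsub]
  -- bound on the outer part
  have hdiff_meas : μ x (Xx \ Xu) = 1 - c := by
    rw [measure_diff hsub mXu.nullMeasurableSet (by exact (lt_of_le_of_lt hc1 ENNReal.one_lt_top).ne),
      hone x]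
  have houter : ∫⁻ y in Xx \ Xu, (f y : ℝ≥0∞) ∂(μ x) ≤ (f u : ℝ≥0∞) * (1 - c) := by
    calc ∫⁻ y in Xx \ Xu, (f y : ℝ≥0∞) ∂(μ x)
        ≤ ∫⁻ _ in Xx \ Xu, (f u : ℝ≥0∞) ∂(μ x) := by
          refine setLIntegral_mono measurable_const fun y hy => ?_
          have huy : u ≤ y := by
            rcases htot x u y hux hy.1 with h | h
            · exact h
            · exact absurd h hy.2
          exact_mod_cast hdec u y huy
      _ = (f u : ℝ≥0∞) * (1 - c) := by
          rw [lintegral_const, Measure.restrict_apply_univ, hdiff_meas]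
  -- f u ≤ Sf(u)
  have hfu : (f u : ℝ≥0∞) ≤ hardyOp μ f u := by
    have : (f u : ℝ≥0∞) * μ u Xu ≤ ∫⁻ y in Xu, (f y : ℝ≥0∞) ∂(μ u) := by
      rw [← setLIntegral_const Xu]
      refine setLIntegral_mono hf.coe_nnreal_ennreal fun y hy => ?_
      exact_mod_cast hdec y u hy
    rwa [hone u, mul_one] at this
  calc hardyOp μ f x
      ≤ c * hardyOp μ f u + (f u : ℝ≥0∞) * (1 - c) := by
        rw [hsplit, hint1]
        exact add_le_add_right houter _
    _ ≤ c * hardyOp μ f u + hardyOp μ f u * (1 - c) := by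
        exact add_le_add_right (mul_le_mul_left hfu _) _
    _ = (c + (1 - c)) * hardyOp μ f u := by ring
    _ = hardyOp μ f u := by rw [add_tsub_cancel_of_le hc1, one_mul]
end

section
/- Let u be a weight on (0,∞), 0 < p < ∞ and C > 0. If for every decreasing sequence (a_n)_{n≥0} ⊆ [0,1] one has ∑_{n=0}^∞ ∫_{a_n}^1 (a_n/t)^p u(n+t) dt ≤ C ∑_{n=0}^∞ ∫_0^{a_n} u(n+t) dt, then for every n ∈ ℕ ∪ {0} and every a ∈ [0,1] one has ∫_a^1 (a/t)^p u(n+t) dt ≤ C ∫_0^{n+a} u(t) dt. -/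
open MeasureTheory Set
open scoped ENNReal NNReal

private lemma stmt9_translate (u : ℝ → ℝ≥0) (hu : Measurable u) (k c : ℝ) :
    ∫⁻ t in Set.Ioc (0:ℝ) c, (u (k+t) : ℝ≥0∞) = ∫⁻ t in Set.Ioc k (k+c), (u t : ℝ≥0∞) := by
  have := (measurePreserving_add_left (volume : Measure ℝ) k).setLIntegral_comp_preimage
    (s := Ioc k (k+c)) measurableSet_Ioc (f := fun t => (u t : ℝ≥0∞)) hu.coe_nnreal_ennreal
  simpa [preimage_const_add_Ioc, sub_self, add_sub_cancel_left] using this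

private lemma stmt9_sum (u : ℝ → ℝ≥0) :
    ∀ n : ℕ, ∀ a : ℝ, 0 ≤ a →
      (∑ k ∈ Finset.range n, ∫⁻ t in Set.Ioc (k:ℝ) (k+1), (u t : ℝ≥0∞)) +
        ∫⁻ t in Set.Ioc ((n:ℝ)) ((n:ℝ)+a), (u t : ℝ≥0∞) =
      ∫⁻ t in Set.Ioc (0:ℝ) ((n:ℝ)+a), (u t : ℝ≥0∞) := by
  intro n
  induction n with
  | zero => intro a _; simp
  | succ n ih =>
    intro a ha
    have h1 : (∑ k ∈ Finset.range (n+1), ∫⁻ t in Set.Ioc (k:ℝ) (k+1), (u t : ℝ≥0∞)) =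
        ∫⁻ t in Set.Ioc (0:ℝ) ((n:ℝ)+1), (u t : ℝ≥0∞) := by
      rw [Finset.sum_range_succ]
      exact ih 1 zero_le_one
    have hcast : ((n+1 : ℕ) : ℝ) = (n:ℝ) + 1 := by push_cast; ring
    rw [hcast, h1, ← lintegral_union measurableSet_Ioc (Set.Ioc_disjoint_Ioc_of_le le_rfl),
      Set.Ioc_union_Ioc_eq_Ioc (by positivity) (by linarith)]

/-- If for every decreasing sequence `(a_n) ⊆ [0,1]` one has
`∑_n ∫_{a_n}^1 (a_n/t)^p u(n+t) dt ≤ C ∑_n ∫_0^{a_n} u(n+t) dt`, then for every `n ∈ ℕ`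
and `a ∈ [0,1]` one has `∫_a^1 (a/t)^p u(n+t) dt ≤ C ∫_0^{n+a} u(t) dt`. -/
theorem stmt9 (u : ℝ → ℝ≥0) (hu : Measurable u)
    (hloc : MeasureTheory.LocallyIntegrableOn (fun t => (u t : ℝ)) (Set.Ioi 0))
    (p : ℝ) (hp : 0 < p) (C : ℝ) (hC : 0 < C)
    (h : ∀ a : ℕ → ℝ, (∀ n, a n ∈ Set.Icc (0 : ℝ) 1) → Antitone a →
      ∑' n : ℕ, ∫⁻ t in Set.Ioc (a n) 1,
          ENNReal.ofReal ((a n / t) ^ p) * (u ((n : ℝ) + t) : ℝ≥0∞) ≤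
        ENNReal.ofReal C *
          ∑' n : ℕ, ∫⁻ t in Set.Ioc (0 : ℝ) (a n), (u ((n : ℝ) + t) : ℝ≥0∞)) :
    ∀ n : ℕ, ∀ a ∈ Set.Icc (0 : ℝ) 1,
      ∫⁻ t in Set.Ioc a 1, ENNReal.ofReal ((a / t) ^ p) * (u ((n : ℝ) + t) : ℝ≥0∞) ≤
        ENNReal.ofReal C * ∫⁻ t in Set.Ioc (0 : ℝ) ((n : ℝ) + a), (u t : ℝ≥0∞) := by
  intro n a ha
  obtain ⟨ha0, ha1⟩ := ha
  set s : ℕ → ℝ := fun k => if k < n then 1 else if k = n then a else 0 with hs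
  have hmem : ∀ k, s k ∈ Set.Icc (0 : ℝ) 1 := by
    intro k
    simp only [hs]
    split_ifs
    · exact ⟨zero_le_one, le_refl 1⟩
    · exact ⟨ha0, ha1⟩
    · exact ⟨le_refl 0, zero_le_one⟩
  have hanti : Antitone s := by
    intro j k hjk
    simp only [hs]
    split_ifs with h1 h2 h3 h4 h5 h6 h7
    all_goals first
      | rfl | exact ha1 | exact ha0 | exact zero_le_one
      | (exfalso; omega)
  have key := h s hmem hanti
  -- LHS tsum collapses to the single term at n
  have hszero : ∀ k, n < k → s k = 0 := by
    intro k hk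
    simp only [hs]
    rw [if_neg (by omega), if_neg (by omega)]
  have hLHS : (∑' k : ℕ, ∫⁻ t in Set.Ioc (s k) 1,
      ENNReal.ofReal ((s k / t) ^ p) * (u ((k : ℝ) + t) : ℝ≥0∞)) =
      ∫⁻ t in Set.Ioc a 1, ENNReal.ofReal ((a / t) ^ p) * (u ((n : ℝ) + t) : ℝ≥0∞) := by
    rw [tsum_eq_single n]
    · have hsn : s n = a := by simp [hs]
      rw [hsn]
    · intro k hk
      rcases lt_or_gt_of_ne hk with hk' | hk'
      ·
        have : s k = 1 := by simp [hs, hk']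
        rw [this, Set.Ioc_self]
        simp
      · have : s k = 0 := hszero k hk'
        rw [this]
        have : ∀ t : ℝ, ENNReal.ofReal (((0:ℝ) / t) ^ p) * (u ((k : ℝ) + t) : ℝ≥0∞) = 0 := by
          intro t
          rw [zero_div, Real.zero_rpow hp.ne', ENNReal.ofReal_zero, zero_mul]
        simp only [this, lintegral_zero]
  -- RHS tsum equals the full integral
  have hRHS : (∑' k : ℕ, ∫⁻ t in Set.Ioc (0 : ℝ) (s k), (u ((k : ℝ) + t) : ℝ≥0∞)) =
      ∫⁻ t in Set.Ioc (0 : ℝ) ((n : ℝ) + a), (u t : ℝ≥0∞) := by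
    rw [tsum_eq_sum (s := Finset.range (n+1)) (by
      intro k hk
      have hk' : n < k := by simpa [Finset.mem_range] using Nat.lt_of_succ_le (not_lt.mp
        (by simpa [Finset.mem_range, Nat.lt_succ_iff] using hk))
      rw [hszero k hk', Set.Ioc_self]
      simp)]
    rw [Finset.sum_range_succ]
    have hlast : s n = a := by simp [hs]
    have hterm : ∀ k, k < n → (∫⁻ t in Set.Ioc (0 : ℝ) (s k), (u ((k : ℝ) + t) : ℝ≥0∞)) =
        ∫⁻ t in Set.Ioc ((k:ℝ)) ((k:ℝ)+1), (u t : ℝ≥0∞) := by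
      intro k hk
      have : s k = 1 := by simp [hs, hk]
      rw [this, stmt9_translate u hu]
    rw [Finset.sum_congr rfl (fun k hk => hterm k (Finset.mem_range.mp hk)), hlast,
      stmt9_translate u hu]
    exact stmt9_sum u n a ha0
  rw [hLHS, hRHS] at key
  exact key
end

section
/- Let u be a weight on (0,∞) and 0 < p < ∞. If u belongs to B_p, then there exists C' > 0 such that for every n ∈ ℕ ∪ {0} and every a ∈ [0,1], ∫_a^1 (a/t)^p u(n+t) dt ≤ C' ∫_0^{n+a} u(t) dt. -/
open MeasureTheory Set
open scoped ENNReal NNReal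

/-- A weight `v` on `(0,∞)` belongs to `B_p` if there is `C > 0` with
`r^p ∫_r^∞ v(x) x^(-p) dx ≤ C ∫_0^r v(x) dx` for all `r > 0`. -/
def BpWeight (v : ℝ → ℝ≥0) (p : ℝ) : Prop :=
  ∃ C : ℝ, 0 < C ∧ ∀ r : ℝ, 0 < r →
    ENNReal.ofReal (r ^ p) *
        ∫⁻ x in Set.Ioi r, (v x : ℝ≥0∞) * ENNReal.ofReal (x ^ (-p)) ≤
      ENNReal.ofReal C * ∫⁻ x in Set.Ioc (0 : ℝ) r, (v x : ℝ≥0∞)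

/-- If the weight `u` belongs to `B_p`, then there is `C' > 0` such that for
every `n ∈ ℕ` and `a ∈ [0,1]`, `∫_a^1 (a/t)^p u(n+t) dt ≤ C' ∫_0^{n+a} u(t) dt`. -/
theorem stmt11 (u : ℝ → ℝ≥0) (hu : Measurable u)
    (hloc : MeasureTheory.LocallyIntegrableOn (fun t => (u t : ℝ)) (Set.Ioi 0))
    (p : ℝ) (hp : 0 < p) (hBp : BpWeight u p) :
    ∃ C' : ℝ, 0 < C' ∧ ∀ n : ℕ, ∀ a ∈ Set.Icc (0 : ℝ) 1,
      ∫⁻ t in Set.Ioc a 1, ENNReal.ofReal ((a / t) ^ p) * (u ((n : ℝ) + t) : ℝ≥0∞) ≤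
        ENNReal.ofReal C' * ∫⁻ t in Set.Ioc (0 : ℝ) ((n : ℝ) + a), (u t : ℝ≥0∞) := by
  obtain ⟨C, hC, hB⟩ := hBp
  refine ⟨C, hC, ?_⟩
  rintro n a ⟨ha0, ha1⟩
  rcases ha0.eq_or_lt with rfl | ha
  · simp only [zero_div, Real.zero_rpow hp.ne', ENNReal.ofReal_zero, zero_mul,
      lintegral_zero]
    exact zero_le
  · have hna : (0:ℝ) < (n : ℝ) + a := by positivity
    have key : ∫⁻ t in Set.Ioc a 1, ENNReal.ofReal ((a / t) ^ p) * (u ((n : ℝ) + t) : ℝ≥0∞) ≤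
        ENNReal.ofReal (((n:ℝ) + a) ^ p) *
          ∫⁻ x in Set.Ioi ((n:ℝ) + a), (u x : ℝ≥0∞) * ENNReal.ofReal (x ^ (-p)) := by
      have step1 : ∫⁻ t in Set.Ioc a 1, ENNReal.ofReal ((a / t) ^ p) * (u ((n : ℝ) + t) : ℝ≥0∞) ≤
          ∫⁻ t in Set.Ioc a 1, ENNReal.ofReal (((n:ℝ) + a) ^ p) *
            ((u ((n : ℝ) + t) : ℝ≥0∞) * ENNReal.ofReal (((n:ℝ) + t) ^ (-p))) := by
        refine setLIntegral_mono_ae (by fun_prop) ?_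
        filter_upwards with t ht
        have htpos : 0 < t := ha.trans ht.1
        have hnt : (0:ℝ) < (n:ℝ) + t := by positivity
        have hfrac : a / t ≤ ((n:ℝ) + a) / ((n:ℝ) + t) := by
          rw [div_le_div_iff₀ htpos hnt]
          nlinarith [ht.1.le, Nat.cast_nonneg (α := ℝ) n]
        have h1 : (a / t) ^ p ≤ (((n:ℝ) + a) / ((n:ℝ) + t)) ^ p :=
          Real.rpow_le_rpow (by positivity) hfrac hp.le
        have h2 : (((n:ℝ) + a) / ((n:ℝ) + t)) ^ p = ((n:ℝ) + a) ^ p * ((n:ℝ) + t) ^ (-p) := by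
          rw [Real.div_rpow hna.le hnt.le, Real.rpow_neg hnt.le, div_eq_mul_inv]
        calc ENNReal.ofReal ((a / t) ^ p) * (u ((n : ℝ) + t) : ℝ≥0∞)
            ≤ ENNReal.ofReal (((n:ℝ) + a) ^ p * ((n:ℝ) + t) ^ (-p)) *
              (u ((n : ℝ) + t) : ℝ≥0∞) :=
          mul_le_mul_left (ENNReal.ofReal_le_ofReal (by rw [← h2]; exact h1)) _
          _ = _ := by rw [ENNReal.ofReal_mul (by positivity)]; ring
      rw [lintegral_const_mul' _ _ ENNReal.ofReal_ne_top] at step1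
      refine step1.trans (mul_le_mul_right ?_ _)
      have hcv : ∫⁻ t in Set.Ioc a 1,
          (u ((n : ℝ) + t) : ℝ≥0∞) * ENNReal.ofReal (((n:ℝ) + t) ^ (-p)) =
          ∫⁻ x in Set.Ioc ((n:ℝ) + a) ((n:ℝ) + 1),
          (u x : ℝ≥0∞) * ENNReal.ofReal (x ^ (-p)) := by
        have := (measurePreserving_add_left (volume : Measure ℝ) (n:ℝ)).setLIntegral_comp_emb
          (MeasurableEquiv.addLeft (n:ℝ)).measurableEmbedding
          (fun x => (u x : ℝ≥0∞) * ENNReal.ofReal (x ^ (-p))) (Set.Ioc a 1)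
        simpa [Set.image_const_add_Ioc, add_comm] using this
      rw [hcv]
      exact lintegral_mono_set (Set.Ioc_subset_Ioi_self.trans (by norm_num))
    calc _ ≤ _ := key
    _ ≤ _ := hB _ hna
end

section
/- Let u₁, u₂ be weights on (0,∞) with 0 < ∫_0^r u_j(t) dt < ∞ for all r > 0 (j = 1,2), and set u(x,y) = u₁(x)u₂(y). Then ‖u‖_{B₁((0,∞)²)} = ‖u₁‖_{B₁} · ‖u₂‖_{B₁}, where ‖u‖_{B₁((0,∞)²)} = sup_D (∫_{(0,∞)²} Sχ_D(s,t) u(s,t) ds dt) / (∫_D u(s,t) ds dt), the supremum taken over all decreasing sets D ⊆ (0,∞)² with 0 < ∫_D u < ∞, and ‖v‖_{B₁} = sup_{r>0} (∫_0^∞ min(1, r/x) v(x) dx) / (∫_0^r v(x) dx) for a weight v on (0,∞). -/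
open MeasureTheory Set
open scoped ENNReal NNReal

/-- A set `D ⊆ (0,∞)²` is decreasing if its indicator is decreasing in each variable. -/
def DecSet2 (D : Set (ℝ × ℝ)) : Prop :=
  D ⊆ Set.Ioi 0 ×ˢ Set.Ioi 0 ∧
    ∀ z ∈ D, ∀ w : ℝ × ℝ, 0 < w.1 → w.1 ≤ z.1 → 0 < w.2 → w.2 ≤ z.2 → w ∈ D

/-- The two-dimensional Hardy operator `Sf(x,y) = (1/(xy)) ∫₀^x ∫₀^y f(s,t) dt ds`. -/
noncomputable def hardy2 (f : ℝ × ℝ → ℝ≥0) (z : ℝ × ℝ) : ℝ≥0∞ :=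
  (∫⁻ w in Set.Ioc 0 z.1 ×ˢ Set.Ioc 0 z.2, (f w : ℝ≥0∞)) / ENNReal.ofReal (z.1 * z.2)

/-- The `B₁((0,∞)²)` "norm" of a weight `u` on `(0,∞)²`:
`sup_D (∫_{(0,∞)²} Sχ_D · u) / (∫_D u)`, the supremum over all decreasing sets `D`
with `0 < ∫_D u < ∞`. -/
noncomputable def B1norm2 (u : ℝ × ℝ → ℝ≥0) : ℝ≥0∞ :=
  ⨆ (D : Set (ℝ × ℝ)) (_ : DecSet2 D) (_ : 0 < ∫⁻ z in D, (u z : ℝ≥0∞))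
      (_ : ∫⁻ z in D, (u z : ℝ≥0∞) < ⊤),
    (∫⁻ z in Set.Ioi (0 : ℝ) ×ˢ Set.Ioi (0 : ℝ),
        hardy2 (D.indicator fun _ => (1 : ℝ≥0)) z * (u z : ℝ≥0∞)) /
      ∫⁻ z in D, (u z : ℝ≥0∞)

/-- The `B₁` "norm" of a weight `v` on `(0,∞)`:
`sup_{r>0} (∫_0^∞ min(1, r/x) v(x) dx) / (∫_0^r v(x) dx)`. -/
noncomputable def B1norm1 (v : ℝ → ℝ≥0) : ℝ≥0∞ :=
  ⨆ (r : ℝ) (_ : 0 < r),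
    (∫⁻ x in Set.Ioi (0 : ℝ), ENNReal.ofReal (min 1 (r / x)) * (v x : ℝ≥0∞)) /
      ∫⁻ x in Set.Ioc (0 : ℝ) r, (v x : ℝ≥0∞)

lemma dc_inter_Ioc {S : Set ℝ} (hS : S ⊆ Ioi 0)
    (hdc : ∀ s ∈ S, ∀ s' : ℝ, 0 < s' → s' ≤ s → s' ∈ S) {x : ℝ} (hx : 0 < x) :
    volume (S ∩ Ioc 0 x) = min (volume S) (ENNReal.ofReal x) := by
  by_cases h : Ioc 0 x ⊆ S
  · rw [Set.inter_eq_self_of_subset_right h]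
    have h1 : ENNReal.ofReal x ≤ volume S := by
      have := measure_mono h (μ := volume)
      rwa [Real.volume_Ioc, sub_zero] at this
    rw [Real.volume_Ioc, sub_zero, min_eq_right h1]
  · rw [Set.not_subset] at h
    obtain ⟨c, hc, hcS⟩ := h
    have hsub : S ⊆ Ioo 0 c := by
      intro s hs
      refine ⟨hS hs, ?_⟩
      by_contra hlt
      exact hcS (hdc s hs c hc.1 (not_lt.1 hlt))
    have h2 : S ∩ Ioc 0 x = S :=
      Set.inter_eq_self_of_subset_left (hsub.trans (fun y hy => ⟨hy.1, hy.2.le.trans hc.2⟩))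
    have h3 : volume S ≤ ENNReal.ofReal x := by
      have := (measure_mono hsub (μ := volume)).trans (measure_mono Ioo_subset_Ioc_self)
      rw [Real.volume_Ioc, sub_zero] at this
      exact this.trans (ENNReal.ofReal_le_ofReal hc.2)
    rw [h2, min_eq_left h3]

lemma B1_ratio_le (u : ℝ → ℝ≥0)
    (hfin : ∀ r : ℝ, 0 < r →
      0 < ∫⁻ t in Set.Ioc (0 : ℝ) r, (u t : ℝ≥0∞) ∧
        ∫⁻ t in Set.Ioc (0 : ℝ) r, (u t : ℝ≥0∞) < ⊤) {r : ℝ} (hr : 0 < r) :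
    ∫⁻ x in Set.Ioi (0 : ℝ), ENNReal.ofReal (min 1 (r / x)) * (u x : ℝ≥0∞) ≤
      B1norm1 u * ∫⁻ t in Set.Ioc (0 : ℝ) r, (u t : ℝ≥0∞) := by
  obtain ⟨hd0, hdt⟩ := hfin r hr
  have hle : (∫⁻ x in Set.Ioi (0 : ℝ), ENNReal.ofReal (min 1 (r / x)) * (u x : ℝ≥0∞)) /
      (∫⁻ t in Set.Ioc (0 : ℝ) r, (u t : ℝ≥0∞)) ≤ B1norm1 u := by
    refine le_trans ?_ (le_iSup _ r)
    rw [iSup_pos hr]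
  rw [ENNReal.div_le_iff hd0.ne' hdt.ne] at hle
  exact hle

lemma one_le_B1 (u : ℝ → ℝ≥0)
    (hfin : ∀ r : ℝ, 0 < r →
      0 < ∫⁻ t in Set.Ioc (0 : ℝ) r, (u t : ℝ≥0∞) ∧
        ∫⁻ t in Set.Ioc (0 : ℝ) r, (u t : ℝ≥0∞) < ⊤) :
    1 ≤ B1norm1 u := by
  obtain ⟨hd0, hdt⟩ := hfin 1 one_pos
  have hnum : (∫⁻ t in Set.Ioc (0 : ℝ) 1, (u t : ℝ≥0∞)) ≤
      ∫⁻ x in Set.Ioi (0 : ℝ), ENNReal.ofReal (min 1 (1 / x)) * (u x : ℝ≥0∞) := by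
    refine le_trans (le_of_eq ?_)
      (lintegral_mono_set (s := Ioc (0:ℝ) 1) Set.Ioc_subset_Ioi_self)
    refine (setLIntegral_congr_fun measurableSet_Ioc ?_).symm
    intro x hx
    beta_reduce
    have : (1:ℝ) ≤ 1 / x := (le_div_iff₀ hx.1).2 (by simpa using hx.2)
    rw [min_eq_left this, ENNReal.ofReal_one, one_mul]
  have : (1:ℝ≥0∞) ≤ (∫⁻ x in Set.Ioi (0 : ℝ), ENNReal.ofReal (min 1 (1 / x)) * (u x : ℝ≥0∞)) /
      (∫⁻ t in Set.Ioc (0 : ℝ) 1, (u t : ℝ≥0∞)) :=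
    ENNReal.le_div_iff_mul_le (Or.inl hd0.ne') (Or.inl hdt.ne) |>.2 (by simpa using hnum)
  refine this.trans ?_
  refine le_trans ?_ (le_iSup _ (1:ℝ))
  rw [iSup_pos one_pos]

lemma keyK (u : ℝ → ℝ≥0)
    (hfin : ∀ r : ℝ, 0 < r →
      0 < ∫⁻ t in Set.Ioc (0 : ℝ) r, (u t : ℝ≥0∞) ∧
        ∫⁻ t in Set.Ioc (0 : ℝ) r, (u t : ℝ≥0∞) < ⊤)
    {S : Set ℝ} (hS : S ⊆ Ioi 0)
    (hdc : ∀ s ∈ S, ∀ s' : ℝ, 0 < s' → s' ≤ s → s' ∈ S) :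
    ∫⁻ x in Set.Ioi (0 : ℝ), min (volume S) (ENNReal.ofReal x) * (ENNReal.ofReal x)⁻¹ * (u x : ℝ≥0∞)
      ≤ B1norm1 u * ∫⁻ t in S, (u t : ℝ≥0∞) := by
  rcases eq_or_ne (volume S) 0 with h0 | h0
  · simp [h0]
  rcases eq_or_ne (volume S) ⊤ with ht | ht
  · -- S = Ioi 0
    have hSeq : S = Ioi 0 := by
      refine Subset.antisymm hS (fun y hy => ?_)
      by_contra hyS
      have hsub : S ⊆ Ioo 0 y := fun s hs =>
        ⟨hS hs, by by_contra hlt; exact hyS (hdc s hs y hy (not_lt.1 hlt))⟩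
      have := measure_mono hsub (μ := volume)
      rw [ht, Real.volume_Ioo] at this
      simp at this
    have heq : ∫⁻ x in Set.Ioi (0 : ℝ),
        min (volume S) (ENNReal.ofReal x) * (ENNReal.ofReal x)⁻¹ * (u x : ℝ≥0∞) =
        ∫⁻ x in Set.Ioi (0 : ℝ), (u x : ℝ≥0∞) := by
      refine setLIntegral_congr_fun measurableSet_Ioi ?_
      intro x hx
      beta_reduce
      rw [ht, min_eq_right le_top, ENNReal.mul_inv_cancel
        (by simpa using hx) ENNReal.ofReal_ne_top, one_mul]
    rw [heq, hSeq]
    exact le_mul_of_one_le_left zero_le (one_le_B1 u hfin)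
  · -- 0 < volume S < ⊤
    set r : ℝ := (volume S).toReal with hr
    have hrpos : 0 < r := ENNReal.toReal_pos h0 ht
    have hvol : volume S = ENNReal.ofReal r := (ENNReal.ofReal_toReal ht).symm
    have hIoo : Ioo 0 r ⊆ S := by
      intro c hc
      by_contra hcS
      have hsub : S ⊆ Ioo 0 c := fun s hs =>
        ⟨hS hs, by by_contra hlt; exact hcS (hdc s hs c hc.1 (not_lt.1 hlt))⟩
      have := measure_mono hsub (μ := volume)
      rw [Real.volume_Ioo, sub_zero, hvol] at this
      exact absurd ((ENNReal.ofReal_le_ofReal_iff hc.1.le).1 this) (not_le.2 hc.2)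
    have heq : ∫⁻ x in Set.Ioi (0 : ℝ),
        min (volume S) (ENNReal.ofReal x) * (ENNReal.ofReal x)⁻¹ * (u x : ℝ≥0∞) =
        ∫⁻ x in Set.Ioi (0 : ℝ), ENNReal.ofReal (min 1 (r / x)) * (u x : ℝ≥0∞) := by
      refine setLIntegral_congr_fun measurableSet_Ioi ?_
      intro x hx
      beta_reduce
      have hx0 : (0:ℝ) < x := hx
      congr 1
      have hmin : (ENNReal.ofReal r ⊓ ENNReal.ofReal x) = ENNReal.ofReal (min r x) :=
        (Monotone.map_min (fun _ _ h => ENNReal.ofReal_le_ofReal h)).symm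
      rw [hvol, hmin, ← div_eq_mul_inv, ← ENNReal.ofReal_div_of_pos hx0]
      congr 1
      rcases le_total r x with h | h
      · rw [min_eq_left h, min_eq_right ((div_le_one hx0).2 h)]
      · rw [min_eq_right h, div_self hx0.ne', min_eq_left ((one_le_div hx0).2 h)]
    rw [heq]
    refine (B1_ratio_le u hfin hrpos).trans ?_
    refine mul_le_mul_right ?_ _
    calc ∫⁻ t in Set.Ioc (0 : ℝ) r, (u t : ℝ≥0∞)
        = ∫⁻ t in Set.Ioo (0 : ℝ) r, (u t : ℝ≥0∞) := by
          refine (setLIntegral_congr ?_); exact (Ioo_ae_eq_Ioc (α := ℝ)).symm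
      _ ≤ ∫⁻ t in S, (u t : ℝ≥0∞) := lintegral_mono_set hIoo

lemma decset_meas_rep {D : Set (ℝ × ℝ)} (hD : DecSet2 D) :
    ∃ D' : Set (ℝ × ℝ), MeasurableSet D' ∧ DecSet2 D' ∧ D =ᵐ[volume] D' := by
  classical
  set φ : ℝ → ℝ≥0∞ := fun x => if x ≤ 0 then ⊤ else ⨆ y ∈ {y | (x, y) ∈ D}, ENNReal.ofReal y
    with hφ
  have hanti : Antitone φ := by
    intro x₁ x₂ h
    by_cases h1 : x₁ ≤ 0
    · simp [hφ, h1]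
    have h1' : (0:ℝ) < x₁ := not_le.1 h1
    have h2' : (0:ℝ) < x₂ := h1'.trans_le h
    simp only [hφ, if_neg h1, if_neg (not_le.2 h2')]
    refine iSup₂_le fun y hy => ?_
    have : (x₁, y) ∈ D := hD.2 (x₂, y) hy (x₁, y) h1' h (hD.1 hy).2 le_rfl
    exact le_iSup₂_of_le y this le_rfl
  have hφm : Measurable φ := Antitone.measurable (α := ℝ≥0∞) hanti
  refine ⟨{z : ℝ × ℝ | 0 < z.1 ∧ 0 < z.2 ∧ ENNReal.ofReal z.2 < φ z.1}, ?_, ?_, ?_⟩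
  · show MeasurableSet ({z : ℝ × ℝ | 0 < z.1} ∩ ({z : ℝ × ℝ | 0 < z.2} ∩
        {z : ℝ × ℝ | ENNReal.ofReal z.2 < φ z.1}))
    exact (measurableSet_lt measurable_const measurable_fst).inter
      ((measurableSet_lt measurable_const measurable_snd).inter
        (measurableSet_lt (ENNReal.measurable_ofReal.comp measurable_snd)
          (hφm.comp measurable_fst)))
  · constructor
    · intro z hz; exact ⟨hz.1, hz.2.1⟩
    · intro z hz w hw1 hw1' hw2 hw2'
      exact ⟨hw1, hw2, lt_of_le_of_lt (ENNReal.ofReal_le_ofReal hw2')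
        (hz.2.2.trans_le (hanti hw1'))⟩
  · have hsub : {z : ℝ × ℝ | 0 < z.1 ∧ 0 < z.2 ∧ ENNReal.ofReal z.2 < φ z.1} ⊆ D := by
      rintro z ⟨hz1, hz2, hlt⟩
      rw [hφ] at hlt
      simp only [if_neg (not_le.2 hz1)] at hlt
      rw [lt_iSup_iff] at hlt
      obtain ⟨y, hy⟩ := hlt
      rw [lt_iSup_iff] at hy
      obtain ⟨hyD, hy⟩ := hy
      have hy0 : 0 < y := (hD.1 hyD).2
      have : z.2 < y := (ENNReal.ofReal_lt_ofReal_iff hy0).1 hy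
      exact hD.2 (z.1, y) hyD z hz1 le_rfl hz2 this.le
    rw [MeasureTheory.ae_eq_set]
    constructor
    · -- D \ D' is null
      set G : Set (ℝ × ℝ) := {z | 0 < z.1 ∧ 0 < z.2 ∧ ENNReal.ofReal z.2 = φ z.1} with hG
      have hGsub : D \ {z : ℝ × ℝ | 0 < z.1 ∧ 0 < z.2 ∧ ENNReal.ofReal z.2 < φ z.1} ⊆ G := by
        rintro z ⟨hzD, hzD'⟩
        have hz1 : 0 < z.1 := (hD.1 hzD).1
        have hz2 : 0 < z.2 := (hD.1 hzD).2
        have hle : ENNReal.ofReal z.2 ≤ φ z.1 := by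
          rw [hφ]; simp only [if_neg (not_le.2 hz1)]
          exact le_iSup₂_of_le z.2 (by simpa using hzD) le_rfl
        refine ⟨hz1, hz2, hle.antisymm ?_⟩
        by_contra hlt
        exact hzD' ⟨hz1, hz2, lt_of_le_of_ne hle (fun h => hlt h.ge)⟩
      refine measure_mono_null hGsub ?_
      have hGm : MeasurableSet G := by
        show MeasurableSet ({z : ℝ × ℝ | 0 < z.1} ∩ ({z : ℝ × ℝ | 0 < z.2} ∩
          {z : ℝ × ℝ | ENNReal.ofReal z.2 = φ z.1}))
        refine (measurableSet_lt measurable_const measurable_fst).inter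
          ((measurableSet_lt measurable_const measurable_snd).inter
            (((measurableSet_le (ENNReal.measurable_ofReal.comp measurable_snd)
                  (hφm.comp measurable_fst)).inter
                (measurableSet_le (hφm.comp measurable_fst)
                  (ENNReal.measurable_ofReal.comp measurable_snd))).congr ?_))
        ext z
        show ENNReal.ofReal z.2 ≤ φ z.1 ∧ φ z.1 ≤ ENNReal.ofReal z.2 ↔
          ENNReal.ofReal z.2 = φ z.1
        exact le_antisymm_iff.symm
      rw [MeasureTheory.Measure.volume_eq_prod ℝ ℝ, Measure.prod_apply hGm]
      have hzero : ∀ x : ℝ, volume (Prod.mk x ⁻¹' G) = 0 := by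
        intro x
        refine measure_mono_null (fun y hy => ?_) (Real.volume_singleton (a := (φ x).toReal))
        obtain ⟨hx, hy0, hyeq⟩ := hy
        show y ∈ ({(φ x).toReal} : Set ℝ)
        rw [Set.mem_singleton_iff, ← hyeq, ENNReal.toReal_ofReal hy0.le]
      calc ∫⁻ x : ℝ, volume (Prod.mk x ⁻¹' G) = ∫⁻ _ : ℝ, (0:ℝ≥0∞) := lintegral_congr hzero
        _ = 0 := lintegral_zero
    · rw [Set.diff_eq_empty.2 hsub]; simp


lemma ofReal_min_mul_inv {r x : ℝ} (hx : 0 < x) :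
    ENNReal.ofReal (min r x) * (ENNReal.ofReal x)⁻¹ = ENNReal.ofReal (min 1 (r / x)) := by
  rw [← div_eq_mul_inv, ← ENNReal.ofReal_div_of_pos hx]
  congr 1
  rcases le_total r x with h | h
  · rw [min_eq_left h, min_eq_right ((div_le_one hx).2 h)]
  · rw [min_eq_right h, div_self hx.ne', min_eq_left ((one_le_div hx).2 h)]

lemma coe_ind (D : Set (ℝ × ℝ)) (w : ℝ × ℝ) :
    ((D.indicator (fun _ => (1 : ℝ≥0)) w : ℝ≥0) : ℝ≥0∞) = D.indicator (fun _ => (1 : ℝ≥0∞)) w := by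
  classical
  by_cases h : w ∈ D <;> simp [h]

lemma hardy2_num {D : Set (ℝ × ℝ)} (hDm : MeasurableSet D) (z : ℝ × ℝ) :
    hardy2 (D.indicator fun _ => (1 : ℝ≥0)) z =
      volume (D ∩ Set.Ioc 0 z.1 ×ˢ Set.Ioc 0 z.2) / ENNReal.ofReal (z.1 * z.2) := by
  unfold hardy2
  congr 1
  rw [lintegral_congr (coe_ind D), lintegral_indicator hDm, setLIntegral_one,
    Measure.restrict_apply hDm]

lemma rect_hardy (r s : ℝ) {z : ℝ × ℝ} (hz1 : 0 < z.1) (hz2 : 0 < z.2) :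
    hardy2 ((Set.Ioc 0 r ×ˢ Set.Ioc 0 s).indicator fun _ => (1 : ℝ≥0)) z
      = ENNReal.ofReal (min 1 (r / z.1)) * ENNReal.ofReal (min 1 (s / z.2)) := by
  rw [hardy2_num (measurableSet_Ioc.prod measurableSet_Ioc)]
  rw [Set.prod_inter_prod]; simp only [Set.Ioc_inter_Ioc, max_self]
  rw [MeasureTheory.Measure.volume_eq_prod ℝ ℝ, Measure.prod_prod, Real.volume_Ioc,
    Real.volume_Ioc, sub_zero, sub_zero, ENNReal.ofReal_mul hz1.le, div_eq_mul_inv,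
    ENNReal.mul_inv (Or.inr ENNReal.ofReal_ne_top) (Or.inl ENNReal.ofReal_ne_top),
    mul_mul_mul_comm, ofReal_min_mul_inv hz1, ofReal_min_mul_inv hz2]

lemma ge_dir (u₁ u₂ : ℝ → ℝ≥0) (h₁ : Measurable u₁) (h₂ : Measurable u₂)
    (hfin₁ : ∀ r : ℝ, 0 < r →
      0 < ∫⁻ t in Set.Ioc (0 : ℝ) r, (u₁ t : ℝ≥0∞) ∧
        ∫⁻ t in Set.Ioc (0 : ℝ) r, (u₁ t : ℝ≥0∞) < ⊤)
    (hfin₂ : ∀ r : ℝ, 0 < r →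
      0 < ∫⁻ t in Set.Ioc (0 : ℝ) r, (u₂ t : ℝ≥0∞) ∧
        ∫⁻ t in Set.Ioc (0 : ℝ) r, (u₂ t : ℝ≥0∞) < ⊤) :
    B1norm1 u₁ * B1norm1 u₂ ≤ B1norm2 (fun z => u₁ z.1 * u₂ z.2) := by
  rw [B1norm1, B1norm1, ENNReal.iSup_mul]
  refine iSup_le fun r => ?_
  rw [ENNReal.iSup_mul]
  refine iSup_le fun hr => ?_
  rw [ENNReal.mul_iSup]
  refine iSup_le fun s => ?_
  rw [ENNReal.mul_iSup]
  refine iSup_le fun hs => ?_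
  -- the rectangle
  set D : Set (ℝ × ℝ) := Set.Ioc 0 r ×ˢ Set.Ioc 0 s with hDdef
  obtain ⟨hd₁0, hd₁t⟩ := hfin₁ r hr
  obtain ⟨hd₂0, hd₂t⟩ := hfin₂ s hs
  have hden : (∫⁻ z in D, ((fun z : ℝ × ℝ => u₁ z.1 * u₂ z.2) z : ℝ≥0∞)) =
      (∫⁻ t in Set.Ioc (0 : ℝ) r, (u₁ t : ℝ≥0∞)) * ∫⁻ t in Set.Ioc (0 : ℝ) s, (u₂ t : ℝ≥0∞) := by
    rw [hDdef, MeasureTheory.Measure.volume_eq_prod ℝ ℝ, ← Measure.prod_restrict]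
    simp only [ENNReal.coe_mul]
    exact lintegral_prod_mul h₁.coe_nnreal_ennreal.aemeasurable h₂.coe_nnreal_ennreal.aemeasurable
  have hnum : (∫⁻ z in Set.Ioi (0 : ℝ) ×ˢ Set.Ioi (0 : ℝ),
      hardy2 (D.indicator fun _ => (1 : ℝ≥0)) z * ((fun z : ℝ × ℝ => u₁ z.1 * u₂ z.2) z : ℝ≥0∞)) =
      (∫⁻ x in Set.Ioi (0 : ℝ), ENNReal.ofReal (min 1 (r / x)) * (u₁ x : ℝ≥0∞)) *
        ∫⁻ x in Set.Ioi (0 : ℝ), ENNReal.ofReal (min 1 (s / x)) * (u₂ x : ℝ≥0∞) := by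
    rw [setLIntegral_congr_fun (measurableSet_Ioi.prod measurableSet_Ioi)
      (fun z (hz : z ∈ Set.Ioi (0:ℝ) ×ˢ Set.Ioi (0:ℝ)) => ?_)
      (g := fun z : ℝ × ℝ => (ENNReal.ofReal (min 1 (r / z.1)) * (u₁ z.1 : ℝ≥0∞)) *
        (ENNReal.ofReal (min 1 (s / z.2)) * (u₂ z.2 : ℝ≥0∞)))]
    · rw [MeasureTheory.Measure.volume_eq_prod ℝ ℝ, ← Measure.prod_restrict]
      exact lintegral_prod_mul
        ((ENNReal.measurable_ofReal.comp (measurable_const.min (measurable_const.div measurable_id))).mul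
          h₁.coe_nnreal_ennreal).aemeasurable
        ((ENNReal.measurable_ofReal.comp (measurable_const.min (measurable_const.div measurable_id))).mul
          h₂.coe_nnreal_ennreal).aemeasurable
    · rw [rect_hardy r s hz.1 hz.2]
      simp only [ENNReal.coe_mul]
      ring
  have hpos : 0 < ∫⁻ z in D, ((fun z : ℝ × ℝ => u₁ z.1 * u₂ z.2) z : ℝ≥0∞) := by
    rw [hden]; exact ENNReal.mul_pos hd₁0.ne' hd₂0.ne'
  have hfin : (∫⁻ z in D, ((fun z : ℝ × ℝ => u₁ z.1 * u₂ z.2) z : ℝ≥0∞)) < ⊤ := by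
    rw [hden]; exact ENNReal.mul_lt_top hd₁t hd₂t
  calc (∫⁻ x in Set.Ioi (0 : ℝ), ENNReal.ofReal (min 1 (r / x)) * (u₁ x : ℝ≥0∞)) /
          (∫⁻ x in Set.Ioc (0 : ℝ) r, (u₁ x : ℝ≥0∞)) *
        ((∫⁻ x in Set.Ioi (0 : ℝ), ENNReal.ofReal (min 1 (s / x)) * (u₂ x : ℝ≥0∞)) /
          ∫⁻ x in Set.Ioc (0 : ℝ) s, (u₂ x : ℝ≥0∞))
      = (∫⁻ z in Set.Ioi (0 : ℝ) ×ˢ Set.Ioi (0 : ℝ),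
          hardy2 (D.indicator fun _ => (1 : ℝ≥0)) z *
            ((fun z : ℝ × ℝ => u₁ z.1 * u₂ z.2) z : ℝ≥0∞)) /
          ∫⁻ z in D, ((fun z : ℝ × ℝ => u₁ z.1 * u₂ z.2) z : ℝ≥0∞) := by
        rw [hnum, hden, div_eq_mul_inv, div_eq_mul_inv, div_eq_mul_inv,
          ENNReal.mul_inv (Or.inl hd₁0.ne') (Or.inl hd₁t.ne), mul_mul_mul_comm]
    _ ≤ B1norm2 (fun z => u₁ z.1 * u₂ z.2) := by
        refine le_iSup_of_le D ?_
        have hDdec : DecSet2 D := by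
          constructor
          · exact Set.prod_mono Set.Ioc_subset_Ioi_self Set.Ioc_subset_Ioi_self
          · rintro z ⟨hz1, hz2⟩ w hw1 hw1' hw2 hw2'
            exact ⟨⟨hw1, hw1'.trans hz1.2⟩, ⟨hw2, hw2'.trans hz2.2⟩⟩
        rw [iSup_pos hDdec, iSup_pos hpos, iSup_pos hfin]


lemma meas_lint_Ioc {β : Type*} [MeasurableSpace β] {F : β × ℝ → ℝ≥0∞}
    (hF : Measurable F) {b : β → ℝ} (hb : Measurable b) :
    Measurable fun z : β => ∫⁻ s in Set.Ioc 0 (b z), F (z, s) := by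
  have hEm : MeasurableSet {p : β × ℝ | 0 < p.2 ∧ p.2 ≤ b p.1} := by
    show MeasurableSet ({p : β × ℝ | 0 < p.2} ∩ {p : β × ℝ | p.2 ≤ b p.1})
    exact (measurableSet_lt measurable_const measurable_snd).inter
      (measurableSet_le measurable_snd (hb.comp measurable_fst))
  have h1 : (fun z : β => ∫⁻ s in Set.Ioc 0 (b z), F (z, s)) =
      fun z : β => ∫⁻ s, ({p : β × ℝ | 0 < p.2 ∧ p.2 ≤ b p.1}.indicator F (z, s)) := by
    funext z
    rw [← lintegral_indicator measurableSet_Ioc]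
    refine lintegral_congr fun s => ?_
    by_cases hs : s ∈ Set.Ioc 0 (b z)
    · have hmem : ((z, s) : β × ℝ) ∈ {p : β × ℝ | 0 < p.2 ∧ p.2 ≤ b p.1} := ⟨hs.1, hs.2⟩
      rw [Set.indicator_of_mem hs, Set.indicator_of_mem hmem]
    · have hmem : ((z, s) : β × ℝ) ∉ {p : β × ℝ | 0 < p.2 ∧ p.2 ≤ b p.1} := fun hc => hs ⟨hc.1, hc.2⟩
      rw [Set.indicator_of_notMem hs, Set.indicator_of_notMem hmem]
  rw [h1]
  exact (hF.indicator hEm).lintegral_prod_right'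

noncomputable def AvD (D : Set (ℝ × ℝ)) : ℝ → ℝ≥0∞ := fun s => volume (Prod.mk s ⁻¹' D)

noncomputable def AD (D : Set (ℝ × ℝ)) : ℝ → ℝ≥0∞ := fun t => volume {s : ℝ | (s, t) ∈ D}

noncomputable def VD (u₂ : ℝ → ℝ≥0) (D : Set (ℝ × ℝ)) : ℝ → ℝ≥0∞ :=
  fun s => ∫⁻ t in Prod.mk s ⁻¹' D, (u₂ t : ℝ≥0∞)

noncomputable def WD (u₁ : ℝ → ℝ≥0) (D : Set (ℝ × ℝ)) : ℝ → ℝ≥0∞ :=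
  fun t => ∫⁻ s in {s : ℝ | (s, t) ∈ D}, (u₁ s : ℝ≥0∞)

section meas

variable {D : Set (ℝ × ℝ)} (hDm : MeasurableSet D) {u₁ u₂ : ℝ → ℝ≥0}

lemma AvD_meas (hDm : MeasurableSet D) : Measurable (AvD D) :=
  measurable_measure_prodMk_left hDm

lemma AD_meas (hDm : MeasurableSet D) : Measurable (AD D) :=
  measurable_measure_prodMk_left (β := ℝ) (hDm.preimage measurable_swap)

lemma VD_repr (hDm : MeasurableSet D) (h₂ : Measurable u₂) (s : ℝ) :
    VD u₂ D s = ∫⁻ t, D.indicator (fun z : ℝ × ℝ => (u₂ z.2 : ℝ≥0∞)) (s, t) := by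
  rw [VD, ← lintegral_indicator (hDm.preimage measurable_prodMk_left)]
  refine lintegral_congr fun t => ?_
  by_cases h : (s, t) ∈ D <;> simp [Set.indicator, h]

lemma VD_meas (hDm : MeasurableSet D) (h₂ : Measurable u₂) : Measurable (VD u₂ D) := by
  have : VD u₂ D = fun s => ∫⁻ t, D.indicator (fun z : ℝ × ℝ => (u₂ z.2 : ℝ≥0∞)) (s, t) :=
    funext (VD_repr hDm h₂)
  rw [this]
  exact ((h₂.coe_nnreal_ennreal.comp measurable_snd).indicator hDm).lintegral_prod_right'

lemma WD_repr (hDm : MeasurableSet D) (h₁ : Measurable u₁) (t : ℝ) :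
    WD u₁ D t = ∫⁻ s, (Prod.swap ⁻¹' D).indicator (fun z : ℝ × ℝ => (u₁ z.2 : ℝ≥0∞)) (t, s) := by
  have hsm : MeasurableSet {s : ℝ | (s, t) ∈ D} := hDm.preimage measurable_prodMk_right
  rw [WD, ← lintegral_indicator hsm]
  refine lintegral_congr fun s => ?_
  by_cases h : (s, t) ∈ D <;> simp [Set.indicator, h, Prod.swap]

lemma WD_meas (hDm : MeasurableSet D) (h₁ : Measurable u₁) : Measurable (WD u₁ D) := by
  have : WD u₁ D = fun t =>
      ∫⁻ s, (Prod.swap ⁻¹' D).indicator (fun z : ℝ × ℝ => (u₁ z.2 : ℝ≥0∞)) (t, s) :=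
    funext (WD_repr hDm h₁)
  rw [this]
  exact ((h₁.coe_nnreal_ennreal.comp measurable_snd).indicator
    (hDm.preimage measurable_swap)).lintegral_prod_right'

end meas


lemma main_le (u₁ u₂ : ℝ → ℝ≥0) (h₁ : Measurable u₁) (h₂ : Measurable u₂)
    (hfin₁ : ∀ r : ℝ, 0 < r →
      0 < ∫⁻ t in Set.Ioc (0 : ℝ) r, (u₁ t : ℝ≥0∞) ∧
        ∫⁻ t in Set.Ioc (0 : ℝ) r, (u₁ t : ℝ≥0∞) < ⊤)
    (hfin₂ : ∀ r : ℝ, 0 < r →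
      0 < ∫⁻ t in Set.Ioc (0 : ℝ) r, (u₂ t : ℝ≥0∞) ∧
        ∫⁻ t in Set.Ioc (0 : ℝ) r, (u₂ t : ℝ≥0∞) < ⊤)
    {D : Set (ℝ × ℝ)} (hDm : MeasurableSet D) (hD : DecSet2 D) :
    (∫⁻ z in Set.Ioi (0 : ℝ) ×ˢ Set.Ioi (0 : ℝ),
        hardy2 (D.indicator fun _ => (1 : ℝ≥0)) z * ((u₁ z.1 * u₂ z.2 : ℝ≥0) : ℝ≥0∞))
      ≤ B1norm1 u₁ * B1norm1 u₂ * ∫⁻ z in D, ((u₁ z.1 * u₂ z.2 : ℝ≥0) : ℝ≥0∞) := by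
  -- section properties
  have hsecV : ∀ s : ℝ, (Prod.mk s ⁻¹' D) ⊆ Set.Ioi 0 := fun s t ht => (hD.1 ht).2
  have hdcV : ∀ s : ℝ, ∀ t ∈ Prod.mk s ⁻¹' D, ∀ t' : ℝ, 0 < t' → t' ≤ t → t' ∈ Prod.mk s ⁻¹' D :=
    fun s t ht t' hh1 hh2 => hD.2 (s, t) ht (s, t') (hD.1 ht).1 le_rfl hh1 hh2
  have hsecH : ∀ t : ℝ, {s : ℝ | (s, t) ∈ D} ⊆ Set.Ioi 0 := fun t s hs => (hD.1 hs).1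
  have hdcH : ∀ t : ℝ, ∀ s ∈ {s : ℝ | (s, t) ∈ D}, ∀ s' : ℝ, 0 < s' → s' ≤ s →
      s' ∈ {s : ℝ | (s, t) ∈ D} :=
    fun t s hs s' hh1 hh2 => hD.2 (s, t) hs (s', t) hh1 hh2 (hD.1 hs).2 le_rfl
  have hsecHm : ∀ t : ℝ, MeasurableSet {s : ℝ | (s, t) ∈ D} :=
    fun t => hDm.preimage measurable_prodMk_right
  -- box slicing formula
  have hbox : ∀ z : ℝ × ℝ, 0 < z.2 →
      volume (D ∩ Set.Ioc 0 z.1 ×ˢ Set.Ioc 0 z.2) =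
        ∫⁻ s in Set.Ioc 0 z.1, min (AvD D s) (ENNReal.ofReal z.2) := by
    intro z hz2
    rw [MeasureTheory.Measure.volume_eq_prod ℝ ℝ,
      Measure.prod_apply (hDm.inter (measurableSet_Ioc.prod measurableSet_Ioc)),
      ← lintegral_indicator measurableSet_Ioc]
    refine lintegral_congr fun s => ?_
    by_cases hs : s ∈ Set.Ioc 0 z.1
    · rw [Set.indicator_of_mem hs]
      have hpre : Prod.mk s ⁻¹' (D ∩ Set.Ioc 0 z.1 ×ˢ Set.Ioc 0 z.2) =
          (Prod.mk s ⁻¹' D) ∩ Set.Ioc 0 z.2 := by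
        ext t
        simp only [Set.mem_preimage, Set.mem_inter_iff, Set.mem_prod]
        exact ⟨fun h => ⟨h.1, h.2.2⟩, fun h => ⟨h.1, hs, h.2⟩⟩
      rw [hpre, dc_inter_Ioc (hsecV s) (hdcV s) hz2]; rfl
    · rw [Set.indicator_of_notMem hs]
      have hpre : Prod.mk s ⁻¹' (D ∩ Set.Ioc 0 z.1 ×ˢ Set.Ioc 0 z.2) = ∅ := by
        ext t
        simp only [Set.mem_preimage, Set.mem_inter_iff, Set.mem_prod, Set.mem_empty_iff_false,
          iff_false]
        exact fun h => hs h.2.1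
      rw [hpre, measure_empty]
  -- pointwise rewriting of the integrand on the positive quadrant
  set g : ℝ × ℝ → ℝ≥0∞ := fun z =>
    (∫⁻ s in Set.Ioc 0 z.1, min (AvD D s) (ENNReal.ofReal z.2)) *
      (((ENNReal.ofReal z.1)⁻¹ * (u₁ z.1 : ℝ≥0∞)) * ((ENNReal.ofReal z.2)⁻¹ * (u₂ z.2 : ℝ≥0∞)))
    with hgdef
  have hG : ∀ z ∈ Set.Ioi (0 : ℝ) ×ˢ Set.Ioi (0 : ℝ),
      hardy2 (D.indicator fun _ => (1 : ℝ≥0)) z * ((u₁ z.1 * u₂ z.2 : ℝ≥0) : ℝ≥0∞) = g z := by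
    rintro z ⟨hz1, hz2⟩
    rw [hardy2_num hDm, hbox z hz2, ENNReal.coe_mul, div_eq_mul_inv,
      ENNReal.ofReal_mul (le_of_lt hz1),
      ENNReal.mul_inv (Or.inr ENNReal.ofReal_ne_top) (Or.inl ENNReal.ofReal_ne_top), hgdef]
    ring
  have hNg : (∫⁻ z in Set.Ioi (0 : ℝ) ×ˢ Set.Ioi (0 : ℝ),
      hardy2 (D.indicator fun _ => (1 : ℝ≥0)) z * ((u₁ z.1 * u₂ z.2 : ℝ≥0) : ℝ≥0∞)) =
      ∫⁻ z in Set.Ioi (0 : ℝ) ×ˢ Set.Ioi (0 : ℝ), g z :=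
    setLIntegral_congr_fun (measurableSet_Ioi.prod measurableSet_Ioi) hG
  -- measurability of g
  have hgm : Measurable g := by
    rw [hgdef]
    refine Measurable.mul ?_ (Measurable.mul
      ((ENNReal.measurable_ofReal.comp measurable_fst).inv.mul
        (h₁.coe_nnreal_ennreal.comp measurable_fst))
      ((ENNReal.measurable_ofReal.comp measurable_snd).inv.mul
        (h₂.coe_nnreal_ennreal.comp measurable_snd)))
    exact meas_lint_Ioc (F := fun p : (ℝ × ℝ) × ℝ => min (AvD D p.2) (ENNReal.ofReal p.1.2))
      (((AvD_meas hDm).comp measurable_snd).min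
        (ENNReal.measurable_ofReal.comp (measurable_fst.snd))) measurable_fst
  rw [hNg, MeasureTheory.Measure.volume_eq_prod ℝ ℝ, ← Measure.prod_restrict,
    lintegral_prod _ hgm.aemeasurable]
  have hVm := VD_meas hDm h₂
  have hkV : Measurable fun x : ℝ => ∫⁻ s in Set.Ioc 0 x, VD u₂ D s :=
    meas_lint_Ioc (F := fun p : ℝ × ℝ => VD u₂ D p.2) (hVm.comp measurable_snd) measurable_id
  have hc1m : Measurable fun x : ℝ => (ENNReal.ofReal x)⁻¹ * (u₁ x : ℝ≥0∞) :=
    ENNReal.measurable_ofReal.inv.mul h₁.coe_nnreal_ennreal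
  have hΦm : Measurable fun x : ℝ => ((ENNReal.ofReal x)⁻¹ * (u₁ x : ℝ≥0∞)) *
      (B1norm1 u₂ * ∫⁻ s in Set.Ioc 0 x, VD u₂ D s) :=
    hc1m.mul (measurable_const.mul hkV)
  refine le_trans (setLIntegral_mono hΦm fun x hx => ?_) ?_
  · -- inner bound for fixed x > 0
    have hx0 : (0:ℝ) < x := hx
    have hc1top : (ENNReal.ofReal x)⁻¹ * (u₁ x : ℝ≥0∞) ≠ ⊤ :=
      ENNReal.mul_ne_top (ENNReal.inv_ne_top.2 (by simpa using hx0)) ENNReal.coe_ne_top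
    calc ∫⁻ y in Set.Ioi (0:ℝ), g (x, y)
        = ((ENNReal.ofReal x)⁻¹ * (u₁ x : ℝ≥0∞)) * ∫⁻ y in Set.Ioi (0:ℝ),
            ∫⁻ s in Set.Ioc 0 x,
              min (AvD D s) (ENNReal.ofReal y) * ((ENNReal.ofReal y)⁻¹ * (u₂ y : ℝ≥0∞)) := by
          rw [← lintegral_const_mul' _ _ hc1top]
          refine setLIntegral_congr_fun measurableSet_Ioi (fun y hy => ?_)
          have hy0 : (0:ℝ) < y := hy
          rw [lintegral_mul_const' _ _
            (ENNReal.mul_ne_top (ENNReal.inv_ne_top.2 (by simpa using hy0)) ENNReal.coe_ne_top)]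
          simp only [hgdef]
          ring
      _ = ((ENNReal.ofReal x)⁻¹ * (u₁ x : ℝ≥0∞)) * ∫⁻ s in Set.Ioc 0 x,
            ∫⁻ y in Set.Ioi (0:ℝ),
              min (AvD D s) (ENNReal.ofReal y) * ((ENNReal.ofReal y)⁻¹ * (u₂ y : ℝ≥0∞)) := by
          congr 1
          exact lintegral_lintegral_swap
            ((((AvD_meas hDm).comp measurable_snd).min
                (ENNReal.measurable_ofReal.comp measurable_fst)).mul
              (((ENNReal.measurable_ofReal.comp measurable_fst).inv).mul
                (h₂.coe_nnreal_ennreal.comp measurable_fst))).aemeasurable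
      _ ≤ ((ENNReal.ofReal x)⁻¹ * (u₁ x : ℝ≥0∞)) * ∫⁻ s in Set.Ioc 0 x,
            B1norm1 u₂ * VD u₂ D s := by
          refine mul_le_mul_right (lintegral_mono fun s => ?_) _
          refine le_trans (le_of_eq (lintegral_congr fun y => (mul_assoc _ _ _).symm)) ?_
          exact keyK u₂ hfin₂ (hsecV s) (hdcV s)
      _ = ((ENNReal.ofReal x)⁻¹ * (u₁ x : ℝ≥0∞)) *
            (B1norm1 u₂ * ∫⁻ s in Set.Ioc 0 x, VD u₂ D s) := by
          rw [lintegral_const_mul _ hVm]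
  · -- outer estimate
    have hVint : ∀ x : ℝ, 0 < x → (∫⁻ s in Set.Ioc 0 x, VD u₂ D s) =
        ∫⁻ t, (u₂ t : ℝ≥0∞) * min (AD D t) (ENNReal.ofReal x) := by
      intro x hx
      calc ∫⁻ s in Set.Ioc 0 x, VD u₂ D s
          = ∫⁻ s in Set.Ioc 0 x, ∫⁻ t, D.indicator (fun z : ℝ × ℝ => (u₂ z.2 : ℝ≥0∞)) (s, t) :=
            lintegral_congr fun s => VD_repr hDm h₂ s
        _ = ∫⁻ t, ∫⁻ s in Set.Ioc 0 x, D.indicator (fun z : ℝ × ℝ => (u₂ z.2 : ℝ≥0∞)) (s, t) :=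
            lintegral_lintegral_swap
              (((h₂.coe_nnreal_ennreal.comp measurable_snd).indicator hDm).aemeasurable)
        _ = ∫⁻ t, (u₂ t : ℝ≥0∞) * min (AD D t) (ENNReal.ofReal x) := by
            refine lintegral_congr fun t => ?_
            have h1 : ∀ s : ℝ, D.indicator (fun z : ℝ × ℝ => (u₂ z.2 : ℝ≥0∞)) (s, t) =
                Set.indicator {s' : ℝ | (s', t) ∈ D} (fun _ => (u₂ t : ℝ≥0∞)) s := by
              intro s; by_cases h : (s, t) ∈ D <;> simp [Set.indicator, h]
            rw [lintegral_congr h1, lintegral_indicator (hsecHm t), setLIntegral_const,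
              Measure.restrict_apply (hsecHm t), dc_inter_Ioc (hsecH t) (hdcH t) hx]
            rfl
    have hIeq : (∫⁻ t, (u₂ t : ℝ≥0∞) * WD u₁ D t) =
        ∫⁻ z in D, ((u₁ z.1 * u₂ z.2 : ℝ≥0) : ℝ≥0∞) := by
      rw [← lintegral_indicator hDm]
      calc ∫⁻ t, (u₂ t : ℝ≥0∞) * WD u₁ D t
          = ∫⁻ t, ∫⁻ s, D.indicator (fun z : ℝ × ℝ => ((u₁ z.1 * u₂ z.2 : ℝ≥0) : ℝ≥0∞)) (s, t) := by
            refine lintegral_congr fun t => ?_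
            have h1 : ∀ s : ℝ,
                D.indicator (fun z : ℝ × ℝ => ((u₁ z.1 * u₂ z.2 : ℝ≥0) : ℝ≥0∞)) (s, t) =
                Set.indicator {s' : ℝ | (s', t) ∈ D}
                  (fun s' => (u₁ s' : ℝ≥0∞) * (u₂ t : ℝ≥0∞)) s := by
              intro s; by_cases h : (s, t) ∈ D <;> simp [Set.indicator, h]
            rw [lintegral_congr h1, lintegral_indicator (hsecHm t),
              lintegral_mul_const' _ _ ENNReal.coe_ne_top, mul_comm]
            rfl
        _ = ∫⁻ z, D.indicator (fun z : ℝ × ℝ => ((u₁ z.1 * u₂ z.2 : ℝ≥0) : ℝ≥0∞)) z := by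
            rw [MeasureTheory.Measure.volume_eq_prod ℝ ℝ]
            refine (lintegral_prod_symm _ ?_).symm
            exact (((h₁.coe_nnreal_ennreal.comp measurable_fst).mul
              (h₂.coe_nnreal_ennreal.comp measurable_snd)).indicator hDm).aemeasurable
    have hm3 : Measurable fun t : ℝ => (u₂ t : ℝ≥0∞) * WD u₁ D t :=
      h₂.coe_nnreal_ennreal.mul (WD_meas hDm h₁)
    calc ∫⁻ x in Set.Ioi (0:ℝ), ((ENNReal.ofReal x)⁻¹ * (u₁ x : ℝ≥0∞)) *
            (B1norm1 u₂ * ∫⁻ s in Set.Ioc 0 x, VD u₂ D s)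
        = B1norm1 u₂ * ∫⁻ x in Set.Ioi (0:ℝ), ((ENNReal.ofReal x)⁻¹ * (u₁ x : ℝ≥0∞)) *
            ∫⁻ s in Set.Ioc 0 x, VD u₂ D s := by
          rw [← lintegral_const_mul (f := fun x : ℝ =>
            ((ENNReal.ofReal x)⁻¹ * (u₁ x : ℝ≥0∞)) * ∫⁻ s in Set.Ioc 0 x, VD u₂ D s) _ (hc1m.mul hkV)]
          exact lintegral_congr fun x => by ring
      _ = B1norm1 u₂ * ∫⁻ x in Set.Ioi (0:ℝ), ∫⁻ t,
            (u₂ t : ℝ≥0∞) * min (AD D t) (ENNReal.ofReal x) *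
              ((ENNReal.ofReal x)⁻¹ * (u₁ x : ℝ≥0∞)) := by
          congr 1
          refine setLIntegral_congr_fun measurableSet_Ioi (fun x hx => ?_)
          have hx0 : (0:ℝ) < x := hx
          rw [hVint x hx0, lintegral_mul_const' _ _
            (ENNReal.mul_ne_top (ENNReal.inv_ne_top.2 (by simpa using hx0)) ENNReal.coe_ne_top)]
          exact mul_comm _ _
      _ = B1norm1 u₂ * ∫⁻ t, ∫⁻ x in Set.Ioi (0:ℝ),
            (u₂ t : ℝ≥0∞) * min (AD D t) (ENNReal.ofReal x) *
              ((ENNReal.ofReal x)⁻¹ * (u₁ x : ℝ≥0∞)) := by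
          congr 1
          exact lintegral_lintegral_swap
            (((h₂.coe_nnreal_ennreal.comp measurable_snd).mul
                (((AD_meas hDm).comp measurable_snd).min
                  (ENNReal.measurable_ofReal.comp measurable_fst))).mul
              ((ENNReal.measurable_ofReal.comp measurable_fst).inv.mul
                (h₁.coe_nnreal_ennreal.comp measurable_fst))).aemeasurable
      _ ≤ B1norm1 u₂ * ∫⁻ t, (u₂ t : ℝ≥0∞) * (B1norm1 u₁ * WD u₁ D t) := by
          refine mul_le_mul_right (lintegral_mono fun t => ?_) _
          calc ∫⁻ x in Set.Ioi (0:ℝ), (u₂ t : ℝ≥0∞) * min (AD D t) (ENNReal.ofReal x) *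
                  ((ENNReal.ofReal x)⁻¹ * (u₁ x : ℝ≥0∞))
              = (u₂ t : ℝ≥0∞) * ∫⁻ x in Set.Ioi (0:ℝ),
                  min (AD D t) (ENNReal.ofReal x) * (ENNReal.ofReal x)⁻¹ * (u₁ x : ℝ≥0∞) := by
                rw [← lintegral_const_mul' _ _ ENNReal.coe_ne_top]
                exact lintegral_congr fun x => by ring
            _ ≤ (u₂ t : ℝ≥0∞) * (B1norm1 u₁ * WD u₁ D t) :=
                mul_le_mul_right (keyK u₁ hfin₁ (hsecH t) (hdcH t)) _
      _ = B1norm1 u₂ * (B1norm1 u₁ * ∫⁻ t, (u₂ t : ℝ≥0∞) * WD u₁ D t) := by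
          congr 1
          rw [← lintegral_const_mul _ hm3]
          exact lintegral_congr fun t => by ring
      _ = B1norm1 u₁ * B1norm1 u₂ * ∫⁻ z in D, ((u₁ z.1 * u₂ z.2 : ℝ≥0) : ℝ≥0∞) := by
          rw [hIeq]; ring


/-- For weights `u₁, u₂` on `(0,∞)` with `0 < ∫_0^r u_j < ∞` for all
`r > 0`, the product weight `u(x,y) = u₁(x)u₂(y)` satisfies
`‖u‖_{B₁((0,∞)²)} = ‖u₁‖_{B₁} ‖u₂‖_{B₁}`. -/
theorem stmt15 (u₁ u₂ : ℝ → ℝ≥0) (h₁ : Measurable u₁) (h₂ : Measurable u₂)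
    (hfin₁ : ∀ r : ℝ, 0 < r →
      0 < ∫⁻ t in Set.Ioc (0 : ℝ) r, (u₁ t : ℝ≥0∞) ∧
        ∫⁻ t in Set.Ioc (0 : ℝ) r, (u₁ t : ℝ≥0∞) < ⊤)
    (hfin₂ : ∀ r : ℝ, 0 < r →
      0 < ∫⁻ t in Set.Ioc (0 : ℝ) r, (u₂ t : ℝ≥0∞) ∧
        ∫⁻ t in Set.Ioc (0 : ℝ) r, (u₂ t : ℝ≥0∞) < ⊤) :
    B1norm2 (fun z => u₁ z.1 * u₂ z.2) = B1norm1 u₁ * B1norm1 u₂ := by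
  refine le_antisymm ?_ (ge_dir u₁ u₂ h₁ h₂ hfin₁ hfin₂)
  simp only [B1norm2]
  refine iSup_le fun D => iSup_le fun hD => iSup_le fun hpos => iSup_le fun hfin => ?_
  obtain ⟨D', hD'm, hD'dec, hae⟩ := decset_meas_rep hD
  have hIeq : (∫⁻ z in D, ((u₁ z.1 * u₂ z.2 : ℝ≥0) : ℝ≥0∞)) =
      ∫⁻ z in D', ((u₁ z.1 * u₂ z.2 : ℝ≥0) : ℝ≥0∞) := by
    rw [Measure.restrict_congr_set hae]
  have hhard : ∀ z : ℝ × ℝ, hardy2 (D.indicator fun _ => (1 : ℝ≥0)) z =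
      hardy2 (D'.indicator fun _ => (1 : ℝ≥0)) z := by
    intro z
    unfold hardy2
    congr 1
    refine lintegral_congr_ae (ae_restrict_of_ae ?_)
    filter_upwards [hae] with w hw
    have hiff : w ∈ D ↔ w ∈ D' := iff_of_eq hw
    by_cases h : w ∈ D'
    · rw [Set.indicator_of_mem (hiff.2 h), Set.indicator_of_mem h]
    · rw [Set.indicator_of_notMem (fun hh => h (hiff.1 hh)), Set.indicator_of_notMem h]
  have hNeq : (∫⁻ z in Set.Ioi (0:ℝ) ×ˢ Set.Ioi (0:ℝ),
      hardy2 (D.indicator fun _ => (1:ℝ≥0)) z * ((u₁ z.1 * u₂ z.2 : ℝ≥0) : ℝ≥0∞)) =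
      ∫⁻ z in Set.Ioi (0:ℝ) ×ˢ Set.Ioi (0:ℝ),
        hardy2 (D'.indicator fun _ => (1:ℝ≥0)) z * ((u₁ z.1 * u₂ z.2 : ℝ≥0) : ℝ≥0∞) :=
    lintegral_congr fun z => by rw [hhard z]
  rw [hNeq, hIeq]
  have hpos' : 0 < ∫⁻ z in D', ((u₁ z.1 * u₂ z.2 : ℝ≥0) : ℝ≥0∞) := hIeq ▸ hpos
  have hfin' : (∫⁻ z in D', ((u₁ z.1 * u₂ z.2 : ℝ≥0) : ℝ≥0∞)) < ⊤ := hIeq ▸ hfin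
  rw [ENNReal.div_le_iff hpos'.ne' hfin'.ne]
  exact main_le u₁ u₂ h₁ h₂ hfin₁ hfin₂ hD'm hD'dec
end

section
/- Let H be the one-dimensional Hardy operator Hf(t) = (1/t) ∫₀^t f(s) ds on (0,∞), let h > 0 and let m ≥ 1 be an integer. Then the m-fold iterate of H applied to the indicator function of (0,h) satisfies: H^m χ_{(0,h)}(t) = 1 for 0 < t ≤ h, and H^m χ_{(0,h)}(t) = (h/t) ∑_{j=0}^{m−1} (1/j!) (log(t/h))^j for t > h. -/
open MeasureTheory Set
open scoped ENNReal NNReal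

/-- The one-dimensional Hardy operator `Hf(t) = (1/t) ∫₀^t f(s) ds`. -/
noncomputable def hardyH (f : ℝ → ℝ) (t : ℝ) : ℝ :=
  (1 / t) * ∫ s in Set.Ioc (0 : ℝ) t, f s

private lemma sum_form17 (h t : ℝ) (hh : 0 < h) (ht : 0 < t) (m : ℕ) :
    ∑ j ∈ Finset.range m, (1 / (Nat.factorial j : ℝ)) * Real.log (t / h) ^ j
      = ∑ j ∈ Finset.range m, (Real.log t - Real.log h) ^ j / (Nat.factorial j : ℝ) := by
  refine Finset.sum_congr rfl fun j _ => ?_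
  rw [Real.log_div ht.ne' hh.ne']
  ring

private lemma step17 (h : ℝ) (hh : 0 < h) (m : ℕ) (g : ℝ → ℝ)
    (h1 : ∀ t : ℝ, 0 < t → t < h → g t = 1)
    (h2 : ∀ t : ℝ, h < t → g t = (h / t) * ∑ j ∈ Finset.range m,
        (Real.log t - Real.log h) ^ j / (Nat.factorial j : ℝ)) :
    (∀ t : ℝ, 0 < t → t ≤ h → hardyH g t = 1) ∧
    (∀ t : ℝ, h < t → hardyH g t = (h / t) * ∑ j ∈ Finset.range (m + 1),
        (Real.log t - Real.log h) ^ j / (Nat.factorial j : ℝ)) := by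
  have key1 : ∀ u : ℝ, 0 < u → u ≤ h →
      g =ᵐ[volume.restrict (Ioc (0:ℝ) u)] fun _ => (1:ℝ) := by
    intro u hu huh
    have hne : ∀ᵐ s : ℝ ∂volume, s ≠ h := by
      rw [ae_iff]
      have : {a : ℝ | ¬ a ≠ h} = {h} := by ext x; simp
      rw [this]
      exact Real.volume_singleton
    filter_upwards [ae_restrict_mem measurableSet_Ioc, ae_restrict_of_ae hne] with s hs hsne
    exact h1 s hs.1 (lt_of_le_of_ne (hs.2.trans huh) hsne)
  have int1 : ∀ u : ℝ, 0 < u → u ≤ h → ∫ s in Ioc (0:ℝ) u, g s = u := by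
    intro u hu huh
    rw [integral_congr_ae (key1 u hu huh), setIntegral_const, smul_eq_mul, mul_one,
      Real.volume_real_Ioc_of_le hu.le]
    ring
  constructor
  · intro t ht hth
    unfold hardyH
    rw [int1 t ht hth]
    field_simp
  · intro t ht
    have ht0 : 0 < t := hh.trans ht
    -- explicit function on (h, t]
    set φ : ℝ → ℝ := fun s => (h / s) * ∑ j ∈ Finset.range m,
      (Real.log s - Real.log h) ^ j / (Nat.factorial j : ℝ) with hφ
    have hcont : ContinuousOn φ (Set.uIcc h t) := by
      rw [Set.uIcc_of_le ht.le]
      apply ContinuousOn.mul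
      · exact continuousOn_const.div continuousOn_id (fun s hs => (hh.trans_le hs.1).ne')
      · apply continuousOn_finset_sum
        intro j _
        refine ContinuousOn.div_const (ContinuousOn.pow ?_ j) _
        exact (Real.continuousOn_log.mono (fun s hs => (hh.trans_le hs.1).ne')).sub
          continuousOn_const
    have hderiv : ∀ s ∈ Set.uIcc h t, HasDerivAt
        (fun x => h * ∑ j ∈ Finset.range m,
          (Real.log x - Real.log h) ^ (j+1) / (Nat.factorial (j+1) : ℝ)) (φ s) s := by
      intro s hs
      rw [Set.uIcc_of_le ht.le] at hs
      have hs0 : (0:ℝ) < s := hh.trans_le hs.1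
      have H : HasDerivAt (fun x => ∑ j ∈ Finset.range m,
          (Real.log x - Real.log h) ^ (j+1) / (Nat.factorial (j+1) : ℝ))
          (∑ j ∈ Finset.range m,
            ((j:ℝ)+1) * (Real.log s - Real.log h) ^ j * s⁻¹ / (Nat.factorial (j+1) : ℝ)) s := by
        apply HasDerivAt.fun_sum
        intro j _
        have hd := (((Real.hasDerivAt_log hs0.ne').sub_const (Real.log h)).pow (j+1)).div_const
          (Nat.factorial (j+1) : ℝ)
        simpa using hd
      have := H.const_mul h
      have heq : h * ∑ j ∈ Finset.range m,
          ((j:ℝ)+1) * (Real.log s - Real.log h) ^ j * s⁻¹ / (Nat.factorial (j+1) : ℝ)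
          = (h / s) * ∑ j ∈ Finset.range m,
            (Real.log s - Real.log h) ^ j / (Nat.factorial j : ℝ) := by
        rw [Finset.mul_sum, Finset.mul_sum]
        refine Finset.sum_congr rfl fun j _ => ?_
        have hj : ((j:ℝ)+1) ≠ 0 := by positivity
        have hf : (Nat.factorial j : ℝ) ≠ 0 := Nat.cast_ne_zero.mpr j.factorial_ne_zero
        rw [Nat.factorial_succ]
        push_cast
        field_simp
      rw [heq] at this
      exact this
    have hFTC := intervalIntegral.integral_eq_sub_of_hasDerivAt hderiv
      (hcont.intervalIntegrable)
    have hΦh : (h * ∑ j ∈ Finset.range m,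
        (Real.log h - Real.log h) ^ (j+1) / (Nat.factorial (j+1) : ℝ)) = 0 := by
      simp
    have hint1 : IntegrableOn g (Ioc (0:ℝ) h) volume := by
      refine ((integrableOn_const ?_).congr (key1 h hh le_rfl).symm)
      rw [Real.volume_Ioc]
      exact ENNReal.ofReal_ne_top
    have hint2 : IntegrableOn g (Ioc h t) volume := by
      rw [integrableOn_congr_fun (fun s hs => h2 s hs.1) measurableSet_Ioc]
      have hc2 : ContinuousOn φ (Icc h t) := by
        rw [← Set.uIcc_of_le ht.le]; exact hcont
      exact hc2.integrableOn_Icc.mono_set Ioc_subset_Icc_self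
    have e2 : ∫ s in Ioc h t, g s = h * ∑ j ∈ Finset.range m,
        (Real.log t - Real.log h) ^ (j+1) / (Nat.factorial (j+1) : ℝ) := by
      rw [setIntegral_congr_fun measurableSet_Ioc (fun s hs => h2 s hs.1)]
      rw [← intervalIntegral.integral_of_le ht.le, hFTC, hΦh, sub_zero]
    unfold hardyH
    rw [show Ioc (0:ℝ) t = Ioc 0 h ∪ Ioc h t from (Set.Ioc_union_Ioc_eq_Ioc hh.le ht.le).symm,
      setIntegral_union (Set.Ioc_disjoint_Ioc_of_le le_rfl) measurableSet_Ioc hint1 hint2,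
      int1 h hh le_rfl, e2, Finset.sum_range_succ']
    simp only [pow_zero, Nat.factorial_zero, Nat.cast_one]
    field_simp
    ring

/-- For `h > 0` and `m ≥ 1`, the `m`-fold iterate of the Hardy operator
applied to the indicator of `(0,h)` equals `1` on `(0,h]` and equals
`(h/t) ∑_{j=0}^{m-1} (1/j!) log(t/h)^j` for `t > h`. -/
theorem stmt17 (h : ℝ) (hh : 0 < h) (m : ℕ) (hm : 1 ≤ m) :
    (∀ t : ℝ, 0 < t → t ≤ h →
      (hardyH^[m]) ((Set.Ioo (0 : ℝ) h).indicator fun _ => (1 : ℝ)) t = 1) ∧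
    (∀ t : ℝ, h < t →
      (hardyH^[m]) ((Set.Ioo (0 : ℝ) h).indicator fun _ => (1 : ℝ)) t =
        (h / t) * ∑ j ∈ Finset.range m,
          (1 / (Nat.factorial j : ℝ)) * Real.log (t / h) ^ j) := by
  obtain ⟨k, rfl⟩ := Nat.exists_eq_succ_of_ne_zero (by omega : m ≠ 0)
  set χ : ℝ → ℝ := (Set.Ioo (0 : ℝ) h).indicator fun _ => (1 : ℝ) with hχ
  have base1 : ∀ t : ℝ, 0 < t → t < h → χ t = 1 := by
    intro t ht hth
    rw [hχ, Set.indicator_of_mem (Set.mem_Ioo.mpr ⟨ht, hth⟩)]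
  have base2 : ∀ t : ℝ, h < t → χ t = (h / t) * ∑ j ∈ Finset.range 0,
      (Real.log t - Real.log h) ^ j / (Nat.factorial j : ℝ) := by
    intro t ht
    rw [hχ, Set.indicator_of_notMem (by simp [not_and, not_lt]; intro; linarith)]
    simp
  have Q : ∀ k : ℕ, (∀ t : ℝ, 0 < t → t ≤ h → (hardyH^[k+1]) χ t = 1) ∧
      (∀ t : ℝ, h < t → (hardyH^[k+1]) χ t = (h / t) * ∑ j ∈ Finset.range (k+1),
        (Real.log t - Real.log h) ^ j / (Nat.factorial j : ℝ)) := by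
    intro k
    induction k with
    | zero =>
      have := step17 h hh 0 χ base1 base2
      simpa [Function.iterate_one] using this
    | succ n ih =>
      have hstep := step17 h hh (n+1) ((hardyH^[n+1]) χ)
        (fun t ht hth => ih.1 t ht hth.le) ih.2
      constructor
      · intro t ht hth
        rw [Function.iterate_succ_apply']
        exact hstep.1 t ht hth
      · intro t ht
        rw [Function.iterate_succ_apply']
        exact hstep.2 t ht
  refine ⟨(Q k).1, fun t ht => ?_⟩
  rw [(Q k).2 t ht, sum_form17 h t hh (hh.trans ht) (k+1)]
end

section
/- For every p with 0 < p < 1 there exists a constant C_p > 0 such that for every decreasing measurable function g : (0,∞) → [0,∞), ∫₀^∞ g(t) dt ≤ C_p ( ∫₀^∞ t^{p−1} g(t)^p dt )^{1/p}. -/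
open MeasureTheory Set
open scoped ENNReal NNReal

private lemma sum_rpow_aux {p : ℝ} (hp0 : 0 < p) (hp1 : p ≤ 1) {ι : Type*} (s : Finset ι)
    (a : ι → ℝ≥0∞) : (∑ i ∈ s, a i) ^ p ≤ ∑ i ∈ s, a i ^ p := by
  induction s using Finset.cons_induction with
  | empty => simp [ENNReal.zero_rpow_of_pos hp0]
  | cons i s hi ih =>
    rw [Finset.sum_cons, Finset.sum_cons]
    exact (ENNReal.rpow_add_le_add_rpow _ _ hp0.le hp1).trans (by gcongr)

private lemma tsum_le_tsum_rpow {p : ℝ} (hp0 : 0 < p) (hp1 : p ≤ 1) (a : ℤ → ℝ≥0∞) :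
    ∑' n, a n ≤ (∑' n, a n ^ p) ^ (1 / p) := by
  rw [ENNReal.tsum_eq_iSup_sum]
  refine iSup_le fun s => ?_
  have h1 : (∑ i ∈ s, a i) ^ p ≤ ∑' n, a n ^ p :=
    (sum_rpow_aux hp0 hp1 s a).trans (ENNReal.sum_le_tsum s)
  calc ∑ i ∈ s, a i = ((∑ i ∈ s, a i) ^ p) ^ (1 / p) := by
        rw [← ENNReal.rpow_mul, mul_one_div, div_self hp0.ne', ENNReal.rpow_one]
    _ ≤ _ := ENNReal.rpow_le_rpow h1 (by positivity)

/-- For every `0 < p < 1` there is a constant `C_p > 0` such that for every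
decreasing measurable `g : (0,∞) → [0,∞)`,
`∫₀^∞ g(t) dt ≤ C_p (∫₀^∞ t^(p-1) g(t)^p dt)^(1/p)`. -/
theorem stmt18 (p : ℝ) (hp0 : 0 < p) (hp1 : p < 1) :
    ∃ C : ℝ, 0 < C ∧ ∀ g : ℝ → ℝ≥0, Measurable g →
      (∀ s t : ℝ, 0 < s → s ≤ t → g t ≤ g s) →
      ∫⁻ t in Set.Ioi (0 : ℝ), (g t : ℝ≥0∞) ≤
        ENNReal.ofReal C *
          (∫⁻ t in Set.Ioi (0 : ℝ),
            ENNReal.ofReal (t ^ (p - 1)) * (g t : ℝ≥0∞) ^ p) ^ (1 / p) := by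
  refine ⟨(2 : ℝ) ^ (1 / p), Real.rpow_pos_of_pos two_pos _, fun g hg hmono => ?_⟩
  set b : ℤ → ℝ := fun n => (2 : ℝ) ^ n with hb_def
  have hb : ∀ n, 0 < b n := fun n => zpow_pos two_pos n
  have hbsucc : ∀ n : ℤ, b (n + 1) = b n * 2 := fun n => zpow_add_one₀ two_ne_zero n
  set S : ℤ → Set ℝ := fun n => Ioc (b n) (b (n + 1)) with hS_def
  have hSm : ∀ n, MeasurableSet (S n) := fun n => measurableSet_Ioc
  have hU : Ioi (0 : ℝ) = ⋃ n : ℤ, S n := by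
    ext x
    simp only [mem_Ioi, mem_iUnion, hS_def, mem_Ioc]
    constructor
    · intro hx
      obtain ⟨n, h1, h2⟩ := exists_mem_Ioc_zpow hx one_lt_two
      exact ⟨n, h1, h2⟩
    · rintro ⟨n, h1, -⟩; exact (hb n).trans h1
  have hdisj : Pairwise (Function.onFun Disjoint S) := by
    have hbmono : Monotone b := fun m n h => zpow_le_zpow_right₀ one_le_two h
    have := hbmono.pairwise_disjoint_on_Ioc_succ
    simpa [hS_def, Order.succ_eq_add_one, Function.onFun] using this
  have hμS : ∀ n, volume (S n) = ENNReal.ofReal (b n) := by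
    intro n
    rw [hS_def]
    simp only [Real.volume_Ioc]
    congr 1
    rw [hbsucc]; ring
  -- the dyadic sequence
  set a : ℤ → ℝ≥0∞ := fun n => (g (b n) : ℝ≥0∞) * ENNReal.ofReal (b n) with ha_def
  -- measurability of the integrands
  have hgm : Measurable fun t => (g t : ℝ≥0∞) := hg.coe_nnreal_ennreal
  have hFm : Measurable fun t : ℝ => ENNReal.ofReal (t ^ (p - 1)) * (g t : ℝ≥0∞) ^ p := by
    exact (ENNReal.measurable_ofReal.comp (measurable_id.pow measurable_const)).mul
      (hgm.pow measurable_const)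
  -- upper bound for the LHS
  have hupper : ∫⁻ t in Ioi (0 : ℝ), (g t : ℝ≥0∞) ≤ ∑' n, a n := by
    rw [hU, lintegral_iUnion hSm hdisj]
    refine ENNReal.tsum_le_tsum fun n => ?_
    calc ∫⁻ t in S n, (g t : ℝ≥0∞) ≤ ∫⁻ _ in S n, (g (b n) : ℝ≥0∞) := by
          refine setLIntegral_mono measurable_const fun x hx => ?_
          exact_mod_cast ENNReal.coe_le_coe.2 (hmono (b n) x (hb n) hx.1.le)
      _ = (g (b n) : ℝ≥0∞) * volume (S n) := by rw [setLIntegral_const]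
      _ = a n := by rw [hμS n, ha_def]
  -- lower bound for the RHS integral
  set J : ℝ≥0∞ := ∫⁻ t in Ioi (0 : ℝ), ENNReal.ofReal (t ^ (p - 1)) * (g t : ℝ≥0∞) ^ p with hJ
  have hlower : ∑' n, a n ^ p ≤ 2 * J := by
    have key : ∀ n : ℤ, a (n + 1) ^ p ≤ 2 * ∫⁻ t in S n,
        ENNReal.ofReal (t ^ (p - 1)) * (g t : ℝ≥0∞) ^ p := by
      intro n
      have hstep : (ENNReal.ofReal ((b (n + 1)) ^ (p - 1)) * (g (b (n + 1)) : ℝ≥0∞) ^ p)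
          * volume (S n) ≤ ∫⁻ t in S n, ENNReal.ofReal (t ^ (p - 1)) * (g t : ℝ≥0∞) ^ p := by
        rw [← setLIntegral_const]
        refine setLIntegral_mono hFm fun x hx => ?_
        have hx0 : 0 < x := (hb n).trans hx.1
        have h1 : (b (n + 1)) ^ (p - 1) ≤ x ^ (p - 1) :=
          Real.rpow_le_rpow_of_nonpos hx0 hx.2 (by linarith)
        have h2 : (g (b (n + 1)) : ℝ≥0∞) ^ p ≤ (g x : ℝ≥0∞) ^ p := by
          gcongr
          exact_mod_cast hmono x (b (n + 1)) hx0 hx.2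
        exact mul_le_mul' (ENNReal.ofReal_le_ofReal h1) h2
      -- now compute `a (n+1) ^ p`
      have hrealid : ENNReal.ofReal ((b (n + 1)) ^ p) =
          ENNReal.ofReal 2 * (ENNReal.ofReal ((b (n + 1)) ^ (p - 1)) * ENNReal.ofReal (b n)) := by
        rw [← ENNReal.ofReal_mul (by positivity), ← ENNReal.ofReal_mul (by norm_num)]
        congr 1
        have h1 : b (n + 1) ^ (p - 1) * b (n + 1) = b (n + 1) ^ p := by
          rw [← Real.rpow_add_one (hb (n + 1)).ne']; ring_nf
        have h2 : b n = b (n + 1) / 2 := by rw [hbsucc]; ring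
        rw [h2, ← h1]; ring
      have hane : a (n + 1) ^ p =
          2 * ((ENNReal.ofReal ((b (n + 1)) ^ (p - 1)) * (g (b (n + 1)) : ℝ≥0∞) ^ p)
            * volume (S n)) := by
        rw [ha_def, hμS n]
        simp only
        rw [ENNReal.mul_rpow_of_nonneg _ _ hp0.le, ENNReal.ofReal_rpow_of_pos (hb (n + 1)),
          hrealid, show (2 : ℝ≥0∞) = ENNReal.ofReal 2 from (ENNReal.ofReal_ofNat 2).symm]
        ring
      rw [hane]
      gcongr
    calc ∑' n, a n ^ p = ∑' n, a (n + 1) ^ p := by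
          exact ((Equiv.addRight (1 : ℤ)).tsum_eq fun n => a n ^ p).symm
      _ ≤ ∑' n, 2 * ∫⁻ t in S n, ENNReal.ofReal (t ^ (p - 1)) * (g t : ℝ≥0∞) ^ p :=
          ENNReal.tsum_le_tsum key
      _ = 2 * ∑' n, ∫⁻ t in S n, ENNReal.ofReal (t ^ (p - 1)) * (g t : ℝ≥0∞) ^ p :=
          ENNReal.tsum_mul_left
      _ = 2 * J := by rw [hJ, hU, lintegral_iUnion hSm hdisj]
  -- put everything together
  calc ∫⁻ t in Ioi (0 : ℝ), (g t : ℝ≥0∞) ≤ ∑' n, a n := hupper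
    _ ≤ (∑' n, a n ^ p) ^ (1 / p) := tsum_le_tsum_rpow hp0 hp1.le a
    _ ≤ (2 * J) ^ (1 / p) := ENNReal.rpow_le_rpow hlower (by positivity)
    _ = ENNReal.ofReal ((2 : ℝ) ^ (1 / p)) * J ^ (1 / p) := by
        rw [ENNReal.mul_rpow_of_nonneg _ _ (by positivity),
          ← ENNReal.ofReal_rpow_of_pos two_pos, ENNReal.ofReal_ofNat]
end
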